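/- Suppose a unimodular polynomial matrix identity of the form [[Y, Z],[U, V]] · [[−D, I, −C],[−B, 0, ξI−A]] = [[−P̂, Q̂, 0],[−E, −F, G]] holds, with G ∈ ℝ^{d'×d'}[ξ] nonsingular. Then Δ([−P̂ Q̂]) + deg(det G) = d, where d is the size of A and Δ(R) denotes the maximal degree among all maximal-size minors formed from columns of the full-row-rank polynomial matrix R. -/

import Mathlib

open Matrix Polynomial

/-- Δ(R): the maximal degree among the determinants of all maximal-size (p×p)
    submatrices formed from columns of the p×q polynomial matrix R. -/
noncomputable def maxMinorDeg {p : ℕ} {q : Type*} [Fintype q] [DecidableEq q]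
    (R : Matrix (Fin p) q (Polynomial ℝ)) : ℕ :=
  Finset.univ.sup fun f : Fin p ↪ q => (R.submatrix id f).det.natDegree

/-- ξ·I as a polynomial matrix. -/
noncomputable def xiIp (d : ℕ) : Matrix (Fin d) (Fin d) (Polynomial ℝ) :=
  Matrix.diagonal (fun _ => (Polynomial.X : Polynomial ℝ))

lemma natDegree_det_le_sum {m : Type*} [Fintype m] [DecidableEq m]
    (M : Matrix m m (Polynomial ℝ)) (c : m → ℕ) (h : ∀ i j, (M i j).natDegree ≤ c j) :
    M.det.natDegree ≤ ∑ j, c j := by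
  rw [Matrix.det_apply']
  refine Polynomial.natDegree_sum_le_of_forall_le _ _ ?_
  intro σ _
  refine (Polynomial.natDegree_mul_le).trans ?_
  have hε : ((Equiv.Perm.sign σ : ℤ) : Polynomial ℝ).natDegree = 0 := by
    rcases Int.units_eq_one_or (Equiv.Perm.sign σ) with hs | hs <;> simp [hs]
  rw [hε, zero_add]
  refine (Polynomial.natDegree_prod_le _ _).trans ?_
  exact Finset.sum_le_sum fun i _ => h (σ i) i

lemma submatrix_mul_cols {l m o o' : Type*} [Fintype m]
    (M : Matrix l m (Polynomial ℝ)) (N : Matrix m o (Polynomial ℝ)) (f : o' → o) :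
    (M * N).submatrix id f = M * (N.submatrix id f) := by
  ext i j
  simp [Matrix.mul_apply]

theorem stmt18 {n d : ℕ}
    (Y : Matrix (Fin n) (Fin n) (Polynomial ℝ)) (Z : Matrix (Fin n) (Fin d) (Polynomial ℝ))
    (U : Matrix (Fin d) (Fin n) (Polynomial ℝ)) (V : Matrix (Fin d) (Fin d) (Polynomial ℝ))
    (Dm : Matrix (Fin n) (Fin n) ℝ) (Cm : Matrix (Fin n) (Fin d) ℝ)
    (Bm : Matrix (Fin d) (Fin n) ℝ) (Am : Matrix (Fin d) (Fin d) ℝ)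
    (Phat Qhat : Matrix (Fin n) (Fin n) (Polynomial ℝ))
    (E F : Matrix (Fin d) (Fin n) (Polynomial ℝ)) (G : Matrix (Fin d) (Fin d) (Polynomial ℝ))
    (hUnimod : IsUnit (Matrix.fromBlocks Y Z U V).det)
    (hG : G.det ≠ 0)
    (hEq : Matrix.fromBlocks Y Z U V *
        Matrix.fromBlocks ((-Dm).map Polynomial.C)
          (Matrix.fromCols (1 : Matrix (Fin n) (Fin n) (Polynomial ℝ))
            ((-Cm).map Polynomial.C))
          ((-Bm).map Polynomial.C)
          (Matrix.fromCols (0 : Matrix (Fin d) (Fin n) (Polynomial ℝ))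
            (xiIp d - Am.map Polynomial.C))
      = Matrix.fromBlocks (-Phat) (Matrix.fromCols Qhat 0)
          (-E) (Matrix.fromCols (-F) G)) :
    maxMinorDeg (Matrix.fromCols (-Phat) Qhat) + G.det.natDegree = d := by
  classical
  set M : Matrix (Fin n ⊕ Fin d) (Fin n ⊕ Fin d) (Polynomial ℝ) :=
    Matrix.fromBlocks Y Z U V with hM
  set N : Matrix (Fin n ⊕ Fin d) (Fin n ⊕ (Fin n ⊕ Fin d)) (Polynomial ℝ) :=
    Matrix.fromBlocks ((-Dm).map Polynomial.C)
      (Matrix.fromCols (1 : Matrix (Fin n) (Fin n) (Polynomial ℝ)) ((-Cm).map Polynomial.C))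
      ((-Bm).map Polynomial.C)
      (Matrix.fromCols (0 : Matrix (Fin d) (Fin n) (Polynomial ℝ))
        (xiIp d - Am.map Polynomial.C)) with hN
  set R : Matrix (Fin n ⊕ Fin d) (Fin n ⊕ (Fin n ⊕ Fin d)) (Polynomial ℝ) :=
    Matrix.fromBlocks (-Phat) (Matrix.fromCols Qhat 0)
      (-E) (Matrix.fromCols (-F) G) with hR
  set T : Matrix (Fin n) (Fin n ⊕ Fin n) (Polynomial ℝ) :=
    Matrix.fromCols (-Phat) Qhat with hT
  -- extract the constant from the unimodularity hypothesis
  obtain ⟨r, hr, hCr⟩ := Polynomial.isUnit_iff.mp hUnimod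
  have hr0 : r ≠ 0 := hr.ne_zero
  -- determinant of submatrices relation
  have hdet : ∀ (g : (Fin n ⊕ Fin d) → (Fin n ⊕ (Fin n ⊕ Fin d))),
      (R.submatrix id g).det = Polynomial.C r * (N.submatrix id g).det := by
    intro g
    rw [← hEq, submatrix_mul_cols, Matrix.det_mul, ← hCr]
  -- the characteristic matrix
  have hchar : xiIp d - Am.map Polynomial.C = Matrix.charmatrix Am := by
    ext i j
    rw [Matrix.charmatrix_apply]
    simp [xiIp, Matrix.map_apply]
  have hcharpoly_deg : (xiIp d - Am.map Polynomial.C).det.natDegree = d := by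
    rw [hchar]
    have : (Matrix.charmatrix Am).det = Am.charpoly := rfl
    rw [this, Matrix.charpoly_natDegree_eq_dim, Fintype.card_fin]
  have hcharpoly_ne : (xiIp d - Am.map Polynomial.C).det ≠ 0 := by
    rw [hchar]
    exact (Matrix.charpoly_monic Am).ne_zero
  -- the Q̂ minor: columns n..2n-1 and 2n..2n+d-1
  have hR0 : R.submatrix id (Sum.inr : (Fin n ⊕ Fin d) → (Fin n ⊕ (Fin n ⊕ Fin d)))
      = Matrix.fromBlocks Qhat 0 (-F) G := by
    ext i j
    cases i <;> cases j <;> simp [hR, Matrix.fromBlocks, Matrix.fromCols]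
  have hN0 : N.submatrix id (Sum.inr : (Fin n ⊕ Fin d) → (Fin n ⊕ (Fin n ⊕ Fin d)))
      = Matrix.fromBlocks 1 ((-Cm).map Polynomial.C) 0 (xiIp d - Am.map Polynomial.C) := by
    ext i j
    cases i <;> cases j <;> simp [hN, Matrix.fromBlocks, Matrix.fromCols]
  have hkey0 : Qhat.det * G.det = Polynomial.C r * (xiIp d - Am.map Polynomial.C).det := by
    have h1 := hdet Sum.inr
    rw [hR0, hN0, Matrix.det_fromBlocks_zero₁₂, Matrix.det_fromBlocks_zero₂₁,
      Matrix.det_one, one_mul] at h1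
    exact h1
  have hQ0 : Qhat.det ≠ 0 := by
    intro h
    apply hcharpoly_ne
    have h0 : Polynomial.C r * (xiIp d - Am.map Polynomial.C).det = 0 := by
      rw [← hkey0, h, zero_mul]
    rcases mul_eq_zero.mp h0 with h' | h'
    · exact absurd h' (Polynomial.C_ne_zero.mpr hr0)
    · exact h'
  have hQG : Qhat.det.natDegree + G.det.natDegree = d := by
    have := congrArg Polynomial.natDegree hkey0
    rwa [Polynomial.natDegree_mul hQ0 hG, Polynomial.natDegree_C_mul hr0,
      hcharpoly_deg] at this
  -- general column embeddings extending f with the full last block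
  have hbound : ∀ f : Fin n ↪ (Fin n ⊕ Fin n),
      ((T.submatrix id f).det).natDegree ≤ Qhat.det.natDegree := by
    intro f
    by_cases h0 : (T.submatrix id f).det = 0
    · simp [h0]
    -- embedding
    set g : (Fin n ⊕ Fin d) ↪ (Fin n ⊕ (Fin n ⊕ Fin d)) :=
      (f.sumMap (Function.Embedding.refl (Fin d))).trans
        (Equiv.sumAssoc (Fin n) (Fin n) (Fin d)).toEmbedding with hg
    have hgl : ∀ j : Fin n, g (Sum.inl j) = Sum.map id Sum.inl (f j) := by
      intro j
      rcases hfj : f j with a | a <;>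
        simp [hg, Function.Embedding.trans_apply, hfj]
    have hgr : ∀ k : Fin d, g (Sum.inr k) = Sum.inr (Sum.inr k) := by
      intro k; simp [hg, Function.Embedding.trans_apply]
    -- block structure of R.submatrix
    have hRf : R.submatrix id g
        = Matrix.fromBlocks (T.submatrix id f) 0
            ((Matrix.fromCols (-E) (-F)).submatrix id f) G := by
      ext i j
      cases i with
      | inl i =>
        cases j with
        | inl j =>
          rcases hfj : f j with a | a <;>
            simp [hR, hT, hgl, hfj, Matrix.fromBlocks, Matrix.fromCols]
        | inr k => simp [hR, hgr, Matrix.fromBlocks, Matrix.fromCols]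
      | inr i =>
        cases j with
        | inl j =>
          rcases hfj : f j with a | a <;>
            simp [hR, hgl, hfj, Matrix.fromBlocks, Matrix.fromCols]
        | inr k => simp [hR, hgr, Matrix.fromBlocks, Matrix.fromCols]
    -- degree bound for the N side
    have hNdeg : ((N.submatrix id g).det).natDegree ≤ d := by
      have hcol : ∀ (i : Fin n ⊕ Fin d) (j : Fin n ⊕ Fin d),
          ((N.submatrix id g) i j).natDegree
            ≤ (Sum.elim (fun _ => 0) (fun _ => 1) : Fin n ⊕ Fin d → ℕ) j := by
        intro i j
        cases j with
        | inl j =>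
          rcases hfj : f j with a | a <;> cases i <;>
            simp [hN, hgl, hfj, Matrix.fromBlocks, Matrix.fromCols,
              Matrix.map_apply, Matrix.one_apply] <;>
            split <;> simp
        | inr k =>
          cases i with
          | inl i =>
            simp [hN, hgr, Matrix.fromBlocks, Matrix.fromCols, Matrix.map_apply]
          | inr i =>
            simp only [hN, Matrix.submatrix_apply, id, hgr, Matrix.fromBlocks,
              Matrix.fromCols, Matrix.of_apply, Sum.elim_inr]
            rcases eq_or_ne i k with hik | hik
            · subst hik
              simp [xiIp, Matrix.sub_apply, Matrix.diagonal_apply_eq, Matrix.map_apply,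
                Polynomial.natDegree_X_sub_C]
            · simp [xiIp, Matrix.sub_apply, Matrix.diagonal_apply_ne _ hik,
                Matrix.map_apply]
      have := natDegree_det_le_sum (N.submatrix id g) _ hcol
      refine this.trans ?_
      simp [Fintype.sum_sum_type]
    -- combine
    have h1 := hdet g
    rw [hRf, Matrix.det_fromBlocks_zero₁₂] at h1
    have h2 : ((T.submatrix id f).det * G.det).natDegree ≤ d := by
      rw [h1, Polynomial.natDegree_C_mul hr0]
      exact hNdeg
    rw [Polynomial.natDegree_mul h0 hG] at h2
    omega
  -- now compute maxMinorDeg T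
  have hmax : maxMinorDeg T = Qhat.det.natDegree := by
    unfold maxMinorDeg
    apply le_antisymm
    · exact Finset.sup_le fun f _ => hbound f
    · have hTQ : T.submatrix id (⟨Sum.inr, Sum.inr_injective⟩ : Fin n ↪ (Fin n ⊕ Fin n))
          = Qhat := by
        ext i j; simp [hT, Matrix.fromCols]
      have hle : ((T.submatrix id (⟨Sum.inr, Sum.inr_injective⟩ : Fin n ↪ (Fin n ⊕ Fin n))).det).natDegree
          ≤ Finset.univ.sup fun f : Fin n ↪ (Fin n ⊕ Fin n) => ((T.submatrix id f).det).natDegree :=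
        Finset.le_sup (f := fun f : Fin n ↪ (Fin n ⊕ Fin n) => ((T.submatrix id f).det).natDegree)
          (Finset.mem_univ (⟨Sum.inr, Sum.inr_injective⟩ : Fin n ↪ (Fin n ⊕ Fin n)))
      rwa [hTQ] at hle
  rw [hmax]
  exact hQG
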